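/- Let ψ = Q_n x_n Q_(n−1) x_(n−1) ⋯ Q_1 x_1 φ(x_n,…,x_1) be a fully quantified Boolean formula in prenex normal form over Var={x_n,…,x_1} (Q_i ∈ {∃,∀}, φ quantifier-free), and let ξ = start → ξ_n be the AB̄ formula defined by: ξ_0 = φ(x_n,…,x_1); ξ_i = ⟨B̄⟩((⟨A⟩ x_{i aux}) ∧ ξ_(i−1)) if Q_i = ∃, and ξ_i = [B̄]((⟨A⟩ x_{i aux}) → ξ_(i−1)) if Q_i = ∀. Then ψ is true if and only if K_QBF^Var ⊨ ξ, i.e., every initial track of K_QBF^Var satisfies ξ. -/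

import Mathlib

open Classical

universe u v

structure KripkeStructure (AP : Type u) (W : Type v) where
  delta : W → W → Prop
  leftTotal : ∀ w, ∃ w', delta w w'
  mu : W → Set AP
  init : W

variable {AP : Type u} {W : Type v}

/-- A track over a Kripke structure: a finite sequence of at least two states
respecting the transition relation. -/
def IsTrack (K : KripkeStructure AP W) (ρ : List W) : Prop :=
  2 ≤ ρ.length ∧ ρ.Chain' K.delta

/-- `σ` is a proper prefix (of length at least 2) of `ρ`, i.e. `σ ∈ Pref(ρ)`. -/
def ProperPrefix (σ ρ : List W) : Prop :=
  σ <+: ρ ∧ σ ≠ ρ ∧ 2 ≤ σ.length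

/-- `σ` is a proper suffix (of length at least 2) of `ρ`, i.e. `σ ∈ Suff(ρ)`. -/
def ProperSuffix (σ ρ : List W) : Prop :=
  σ <:+ ρ ∧ σ ≠ ρ ∧ 2 ≤ σ.length

/-- Formulas of the HS fragment AĀBB̄Ē. -/
inductive HSFormula (AP : Type u) : Type u where
  | prop (p : AP)
  | neg (φ : HSFormula AP)
  | and (φ ψ : HSFormula AP)
  | modA (φ : HSFormula AP)
  | modAbar (φ : HSFormula AP)
  | modB (φ : HSFormula AP)
  | modBbar (φ : HSFormula AP)
  | modEbar (φ : HSFormula AP)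

/-- Satisfaction of an HS formula by a track, under the homogeneity assumption. -/
def sat (K : KripkeStructure AP W) : HSFormula AP → List W → Prop
  | .prop p, ρ => ∀ w ∈ ρ, p ∈ K.mu w
  | .neg φ, ρ => ¬ sat K φ ρ
  | .and φ ψ, ρ => sat K φ ρ ∧ sat K ψ ρ
  | .modA φ, ρ => ∃ σ, IsTrack K σ ∧ σ.head? = ρ.getLast? ∧ sat K φ σ
  | .modAbar φ, ρ => ∃ σ, IsTrack K σ ∧ σ.getLast? = ρ.head? ∧ sat K φ σ
  | .modB φ, ρ => ∃ σ, ProperPrefix σ ρ ∧ sat K φ σ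
  | .modBbar φ, ρ => ∃ σ, IsTrack K σ ∧ ProperPrefix ρ σ ∧ sat K φ σ
  | .modEbar φ, ρ => ∃ σ, IsTrack K σ ∧ ProperSuffix ρ σ ∧ sat K φ σ

/-- The B-nesting depth of an AĀBB̄Ē formula. -/
def nestB : HSFormula AP → ℕ
  | .prop _ => 0
  | .neg φ => nestB φ
  | .and φ ψ => max (nestB φ) (nestB ψ)
  | .modA φ => nestB φ
  | .modAbar φ => nestB φ
  | .modB φ => 1 + nestB φ
  | .modBbar φ => nestB φ
  | .modEbar φ => nestB φ

/-- Quantifier-free Boolean formulas. -/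
inductive BForm (V : Type u) : Type u where
  | var (x : V)
  | neg (φ : BForm V)
  | and (φ ψ : BForm V)
  | or (φ ψ : BForm V)

/-- Evaluation of a Boolean formula under a truth assignment. -/
def BForm.eval {V : Type u} (α : V → Bool) : BForm V → Bool
  | .var x => α x
  | .neg φ => !(φ.eval α)
  | .and φ ψ => φ.eval α && ψ.eval α
  | .or φ ψ => φ.eval α || ψ.eval α

/-- The variables occurring in a Boolean formula. -/
def BForm.vars {V : Type u} : BForm V → Set V
  | .var x => {x}
  | .neg φ => φ.vars
  | .and φ ψ => φ.vars ∪ ψ.vars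
  | .or φ ψ => φ.vars ∪ ψ.vars

/-- Truth of the prenex quantified Boolean formula
`Q_i x_i Q_(i-1) x_(i-1) ⋯ Q_1 x_1 φ` under assignment `α` (`Q j = true` means
that `x_j` is existentially quantified). -/
def qbfTrue (Q : ℕ → Bool) (φ : BForm ℕ) : ℕ → (ℕ → Bool) → Prop
  | 0, α => φ.eval α = true
  | i + 1, α =>
      if Q (i + 1) = true then ∃ b, qbfTrue Q φ i (Function.update α (i + 1) b)
      else ∀ b, qbfTrue Q φ i (Function.update α (i + 1) b)

/-- Proposition letters of `K_QBF`: the variables, `start` and the auxiliary letters. -/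
inductive QProp : Type where
  | var (i : ℕ)
  | start
  | aux (i : ℕ)

/-- States of `K_QBF` for `n` variables: `v i b second` is `w_(x_(i+1))^(b, 1 or 2)`. -/
inductive QState (n : ℕ) : Type where
  | w0
  | w1
  | sink
  | v (i : Fin n) (b : Bool) (second : Bool)

/-- The transition relation of `K_QBF`. -/
def qDelta (n : ℕ) : QState n → QState n → Prop
  | .w0, .w1 => True
  | .w1, .sink => n = 0
  | .w1, .v i _ sec => i.1 = n - 1 ∧ sec = false
  | .v i b false, .v i' b' sec' => i' = i ∧ b' = b ∧ sec' = true
  | .v i _ true, .v i' _ sec' => 1 ≤ i.1 ∧ i'.1 = i.1 - 1 ∧ sec' = false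
  | .v i _ true, .sink => i.1 = 0
  | .sink, .sink => True
  | _, _ => False

theorem qDelta_leftTotal (n : ℕ) : ∀ s, ∃ t, qDelta n s t := by
  intro s
  match s with
  | .w0 => exact ⟨.w1, trivial⟩
  | .w1 =>
    cases n with
    | zero => exact ⟨.sink, rfl⟩
    | succ m =>
        refine ⟨.v ⟨m, Nat.lt_succ_self m⟩ true false, ?_, rfl⟩
        simp
  | .sink => exact ⟨.sink, trivial⟩
  | .v i b false => exact ⟨.v i b true, rfl, rfl, rfl⟩
  | .v i b true =>
    by_cases h : i.1 = 0
    · exact ⟨.sink, h⟩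
    · exact ⟨.v ⟨i.1 - 1, by omega⟩ true false, by omega, rfl, rfl⟩

/-- The labelling of `K_QBF` (variables are `1, …, n`). -/
def qMu (n : ℕ) : QState n → Set QProp
  | .w0 => {p | (∃ j, 1 ≤ j ∧ j ≤ n ∧ p = .var j) ∨ p = .start}
  | .w1 => {p | (∃ j, 1 ≤ j ∧ j ≤ n ∧ p = .var j) ∨ p = .start}
  | .sink => {p | ∃ j, 1 ≤ j ∧ j ≤ n ∧ p = .var j}
  | .v i true _ => {p | (∃ j, 1 ≤ j ∧ j ≤ n ∧ p = .var j) ∨ p = .aux (i.1 + 1)}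
  | .v i false _ => {p | (∃ j, 1 ≤ j ∧ j ≤ n ∧ j ≠ i.1 + 1 ∧ p = .var j) ∨ p = .aux (i.1 + 1)}

/-- The Kripke structure `K_QBF^Var` for variables `x_1, …, x_n`. -/
def KQBF (n : ℕ) : KripkeStructure QProp (QState n) where
  delta := qDelta n
  leftTotal := qDelta_leftTotal n
  mu := qMu n
  init := .w0

/-- A quantifier-free Boolean formula read as an HS formula over `QProp`. -/
def BForm.toHSQ : BForm ℕ → HSFormula QProp
  | .var x => .prop (.var x)
  | .neg φ => .neg φ.toHSQ
  | .and φ ψ => .and φ.toHSQ ψ.toHSQ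
  | .or φ ψ => .neg (.and (.neg φ.toHSQ) (.neg ψ.toHSQ))

/-- The formula `ξ_i`: `ξ_0 = φ`; `ξ_i = ⟨B̄⟩((⟨A⟩ x_{i aux}) ∧ ξ_(i-1))` if
`Q_i = ∃`, and `ξ_i = [B̄]((⟨A⟩ x_{i aux}) → ξ_(i-1))` if `Q_i = ∀`. -/
def xiF (Q : ℕ → Bool) (φ : BForm ℕ) : ℕ → HSFormula QProp
  | 0 => φ.toHSQ
  | i + 1 =>
      if Q (i + 1) = true then
        .modBbar (.and (.modA (.prop (.aux (i + 1)))) (xiF Q φ i))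
      else
        .neg (.modBbar (.and (.modA (.prop (.aux (i + 1)))) (.neg (xiF Q φ i))))

namespace QAux
open QState

variable {n : ℕ}

/-- rank of a state along the caterpillar. -/
def rnk (n : ℕ) : QState n → ℕ
  | .w0 => 0
  | .w1 => 1
  | .sink => 2*n+2
  | .v i _ s => 2*(n-1-i.1) + (if s then 3 else 2)

lemma delta_w0 {x : QState n} (h : qDelta n .w0 x) : x = .w1 := by
  cases x with
  | w1 => rfl
  | w0 => exact absurd h (by simp [qDelta])
  | sink => exact absurd h (by simp [qDelta])
  | v i b s => exact absurd h (by simp [qDelta])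

lemma delta_sink {x : QState n} (h : qDelta n .sink x) : x = .sink := by
  cases x with
  | sink => rfl
  | w0 => exact absurd h (by simp [qDelta])
  | w1 => exact absurd h (by simp [qDelta])
  | v i b s => exact absurd h (by simp [qDelta])

lemma delta_vfalse {k : Fin n} {c : Bool} {x : QState n} (h : qDelta n (.v k c false) x) :
    x = .v k c true := by
  cases x with
  | v i b s =>
    obtain ⟨h1, h2, h3⟩ := h
    subst h1; subst h2; subst h3; rfl
  | w0 => exact absurd h (by simp [qDelta])
  | w1 => exact absurd h (by simp [qDelta])
  | sink => exact absurd h (by simp [qDelta])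

lemma rnk_step {u w : QState n} (h : qDelta n u w) (hw : w ≠ .sink) :
    rnk n w = rnk n u + 1 := by
  cases u with
  | w0 => rw [delta_w0 h]; rfl
  | sink => exact absurd (delta_sink h) hw
  | w1 =>
    cases w with
    | sink => exact absurd rfl hw
    | w0 => exact absurd h (by simp [qDelta])
    | w1 => exact absurd h (by simp [qDelta])
    | v i b s =>
      obtain ⟨h1, h2⟩ := h
      subst h2
      have : i.1 < n := i.2
      simp [rnk]; omega
  | v i b s =>
    cases s with
    | false =>
      rw [delta_vfalse h]
      simp [rnk]
    | true =>
      cases w with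
      | sink => exact absurd rfl hw
      | w0 => exact absurd h (by simp [qDelta])
      | w1 => exact absurd h (by simp [qDelta])
      | v i' b' s' =>
        obtain ⟨h1, h2, h3⟩ := h
        subst h3
        have : i.1 < n := i.2
        simp [rnk]; omega

lemma chain_sink : ∀ (τ : List (QState n)), List.Chain' (qDelta n) (.sink :: τ) →
    ∀ e, (QState.sink :: τ).getLast? = some e → e = .sink := by
  intro τ
  induction τ with
  | nil => intro _ e he; simp at he; exact he.symm
  | cons w τ ih =>
    intro h e he
    unfold List.Chain' at h; rw [List.isChain_cons_cons] at h
    have hw := delta_sink h.1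
    subst hw
    exact ih h.2 e (by simpa using he)

lemma rnk_chain : ∀ (τ : List (QState n)) (u : QState n),
    List.Chain' (qDelta n) (u :: τ) → ∀ e, (u :: τ).getLast? = some e → e ≠ .sink →
    rnk n e = rnk n u + τ.length := by
  intro τ
  induction τ with
  | nil => intro u _ e he _; simp at he; subst he; simp
  | cons w τ ih =>
    intro u h e he hs
    unfold List.Chain' at h; rw [List.isChain_cons_cons] at h
    have hw : w ≠ QState.sink := by
      rintro rfl
      exact hs (chain_sink τ h.2 e (by simpa using he))
    have h1 := rnk_step h.1 hw
    have h2 := ih w h.2 e (by simpa using he) hs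
    simp [h2, h1]; omega

/-- membership facts for var in mu -/
lemma var_mem_mu_bound {w : QState n} {j : ℕ} (h : QProp.var j ∈ qMu n w) :
    1 ≤ j ∧ j ≤ n := by
  cases w with
  | w0 => rcases h with ⟨j', h1, h2, h3⟩ | h; · cases h3; exact ⟨h1, h2⟩
          · cases h
  | w1 => rcases h with ⟨j', h1, h2, h3⟩ | h; · cases h3; exact ⟨h1, h2⟩
          · cases h
  | sink => rcases h with ⟨j', h1, h2, h3⟩; cases h3; exact ⟨h1, h2⟩
  | v i b s =>
    cases b with
    | true => rcases h with ⟨j', h1, h2, h3⟩ | h; · cases h3; exact ⟨h1, h2⟩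
              · cases h
    | false => rcases h with ⟨j', h1, h2, _, h3⟩ | h; · cases h3; exact ⟨h1, h2⟩
               · cases h

lemma var_mem_v {k : Fin n} {c s : Bool} {j : ℕ} (h1 : 1 ≤ j) (h2 : j ≤ n)
    (h3 : c = true ∨ j ≠ k.1 + 1) : QProp.var j ∈ qMu n (.v k c s) := by
  cases c with
  | true => exact Or.inl ⟨j, h1, h2, rfl⟩
  | false =>
    rcases h3 with h3 | h3
    · cases h3
    · exact Or.inl ⟨j, h1, h2, h3, rfl⟩

lemma var_not_mem_v {k : Fin n} {s : Bool} :
    QProp.var (k.1 + 1) ∉ qMu n (.v k false s) := by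
  rintro (⟨j', _, _, hne, hj⟩ | h)
  · cases hj; exact hne rfl
  · cases h

lemma aux_mem_mu {w : QState n} {m : ℕ} (h : QProp.aux m ∈ qMu n w) :
    ∃ (k : Fin n) (b s : Bool), w = .v k b s ∧ k.1 + 1 = m := by
  cases w with
  | w0 =>
    rcases h with ⟨j', _, _, h3⟩ | h
    · cases h3
    · cases h
  | w1 =>
    rcases h with ⟨j', _, _, h3⟩ | h
    · cases h3
    · cases h
  | sink => rcases h with ⟨j', _, _, h3⟩; cases h3
  | v i b s =>
    refine ⟨i, b, s, rfl, ?_⟩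
    cases b with
    | true => rcases h with ⟨j', _, _, h3⟩ | h; · cases h3
              · cases h; rfl
    | false => rcases h with ⟨j', _, _, _, h3⟩ | h; · cases h3
               · cases h; rfl

lemma aux_mem_v {k : Fin n} {b s : Bool} : QProp.aux (k.1 + 1) ∈ qMu n (.v k b s) := by
  cases b with
  | true => exact Or.inr rfl
  | false => exact Or.inr rfl

/-- Lemma A1: ⟨A⟩ aux m forces the track to end at `v k b false` with `k+1 = m`. -/
lemma modA_aux_end {σ : List (QState n)} {m : ℕ}
    (h : sat (KQBF n) (.modA (.prop (.aux m))) σ) :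
    ∃ (k : Fin n) (b : Bool), k.1 + 1 = m ∧ σ.getLast? = some (.v k b false) := by
  obtain ⟨σ', ⟨hlen, hch⟩, hhd, hsat⟩ := h
  match σ', hlen, hch, hhd, hsat with
  | a1 :: a2 :: rest, _, hch, hhd, hsat =>
    have h1 : QProp.aux m ∈ qMu n a1 := hsat a1 (by simp)
    have h2 : QProp.aux m ∈ qMu n a2 := hsat a2 (by simp)
    obtain ⟨k, b, s, rfl, hk⟩ := aux_mem_mu h1
    obtain ⟨k', b', s', rfl, hk'⟩ := aux_mem_mu h2
    unfold List.Chain' at hch; rw [List.isChain_cons_cons] at hch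
    have hd := hch.1
    cases s with
    | false =>
      refine ⟨k, b, hk, ?_⟩
      simp at hhd
      exact hhd ▸ rfl
    | true =>
      obtain ⟨hge, heq, _⟩ := hd
      exfalso
      have : k'.1 + 1 = k.1 + 1 := hk'.trans hk.symm
      omega

/-- Lemma A2 -/
lemma modA_aux_of_end {σ : List (QState n)} {k : Fin n} {b : Bool}
    (h : σ.getLast? = some (.v k b false)) :
    sat (KQBF n) (.modA (.prop (.aux (k.1 + 1)))) σ := by
  refine ⟨[.v k b false, .v k b true], ⟨by simp, ?_⟩, by simpa using h.symm, ?_⟩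
  · refine List.isChain_cons_cons.mpr ⟨⟨rfl, rfl, rfl⟩, by simp⟩
  · intro w hw
    have : w = QState.v k b false ∨ w = QState.v k b true := by simpa using hw
    rcases this with rfl | rfl <;> exact aux_mem_v

/-- The assignment read off from a track. -/
noncomputable def alphaOf (n : ℕ) (ρ : List (QState n)) : ℕ → Bool := fun j =>
  @ite _ (∀ w ∈ ρ, QProp.var j ∈ qMu n w) (Classical.propDecidable _) true false

lemma alphaOf_eq_true {ρ : List (QState n)} {j : ℕ} :
    alphaOf n ρ j = true ↔ ∀ w ∈ ρ, QProp.var j ∈ qMu n w := by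
  unfold alphaOf
  split
  next h => simpa using h
  next h => simp only [Bool.false_eq_true, false_iff]; exact h

/-- Lemma C: a Boolean formula read as an HS formula is satisfied by a track iff
it evaluates to true under the track's assignment. -/
lemma sat_toHSQ (ψ : BForm ℕ) (ρ : List (QState n)) :
    sat (KQBF n) ψ.toHSQ ρ ↔ ψ.eval (alphaOf n ρ) = true := by
  induction ψ with
  | var x => simp [BForm.toHSQ, BForm.eval, sat, alphaOf_eq_true, KQBF]
  | neg ψ ih => simp [BForm.toHSQ, BForm.eval, sat, ih]
  | and ψ1 ψ2 ih1 ih2 => simp [BForm.toHSQ, BForm.eval, sat, ih1, ih2]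
  | or ψ1 ψ2 ih1 ih2 =>
    have hs : sat (KQBF n) (BForm.or ψ1 ψ2).toHSQ ρ ↔
        (sat (KQBF n) ψ1.toHSQ ρ ∨ sat (KQBF n) ψ2.toHSQ ρ) := by
      simp [BForm.toHSQ, sat]; tauto
    rw [hs, ih1, ih2]
    simp [BForm.eval]

lemma eval_congr {ψ : BForm ℕ} {α α' : ℕ → Bool} (h : ∀ x ∈ ψ.vars, α x = α' x) :
    ψ.eval α = ψ.eval α' := by
  induction ψ with
  | var x => exact h x rfl
  | neg ψ ih => simp [BForm.eval, ih (fun x hx => h x hx)]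
  | and ψ1 ψ2 ih1 ih2 =>
    simp [BForm.eval, ih1 (fun x hx => h x (Or.inl hx)), ih2 (fun x hx => h x (Or.inr hx))]
  | or ψ1 ψ2 ih1 ih2 =>
    simp [BForm.eval, ih1 (fun x hx => h x (Or.inl hx)), ih2 (fun x hx => h x (Or.inr hx))]

lemma qbf_congr (Q : ℕ → Bool) (ψ : BForm ℕ) :
    ∀ (i : ℕ) (α α' : ℕ → Bool), (∀ x ∈ ψ.vars, (1 ≤ x ∧ x ≤ i) ∨ α x = α' x) →
    (qbfTrue Q ψ i α ↔ qbfTrue Q ψ i α') := by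
  intro i
  induction i with
  | zero =>
    intro α α' h
    have : ψ.eval α = ψ.eval α' := eval_congr (fun x hx => by
      rcases h x hx with ⟨h1, h2⟩ | h
      · omega
      · exact h)
    simp [qbfTrue, this]
  | succ i ih =>
    intro α α' h
    have key : ∀ b : Bool, qbfTrue Q ψ i (Function.update α (i+1) b) ↔
        qbfTrue Q ψ i (Function.update α' (i+1) b) := by
      intro b
      apply ih
      intro x hx
      by_cases hxi : x = i + 1
      · subst hxi; right; simp
      · rcases h x hx with ⟨h1, h2⟩ | heq
        · rcases Nat.lt_or_ge x (i+1) with h3 | h3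
          · left; omega
          · left; omega
        · right; simp [Function.update, hxi, heq]
    by_cases hQ : Q (i+1) = true <;> simp [qbfTrue, hQ, key]

lemma chain_tail {ρ τ : List (QState n)} {u : QState n}
    (hch : List.Chain' (qDelta n) (ρ ++ τ)) (hu : ρ.getLast? = some u) :
    List.Chain' (qDelta n) (u :: τ) := by
  have hd : ρ.dropLast ++ [u] = ρ := List.dropLast_append_getLast? u hu
  have : (u :: τ) <:+ ρ ++ τ := ⟨ρ.dropLast, by rw [← hd]; simp⟩
  exact hch.suffix this

lemma pp_decomp {ρ σ : List (QState n)} (hpp : ProperPrefix ρ σ) :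
    ∃ τ, σ = ρ ++ τ ∧ τ ≠ [] := by
  obtain ⟨⟨τ, rfl⟩, hne, _⟩ := hpp
  exact ⟨τ, rfl, by rintro rfl; simp at hne⟩

lemma getLast?_append_ne {X : Type _} {τ : List X} (h : τ ≠ []) (l : List X) :
    (l ++ τ).getLast? = τ.getLast? := by
  rw [List.getLast?_append]
  cases ht : τ.getLast? with
  | none => exact absurd (List.getLast?_eq_none_iff.mp ht) h
  | some e => simp

lemma ext_w1 {ρ σ : List (QState n)} (hlast : ρ.getLast? = some .w1)
    (hσ : IsTrack (KQBF n) σ) (hpp : ProperPrefix ρ σ) {k : Fin n} {b : Bool}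
    (hend : σ.getLast? = some (.v k b false)) (hk : k.1 = n - 1) :
    σ = ρ ++ [.v k b false] := by
  obtain ⟨τ, rfl, hτ⟩ := pp_decomp hpp
  have hch : List.Chain' (qDelta n) (QState.w1 :: τ) := chain_tail hσ.2 hlast
  have hend' : (QState.w1 :: τ).getLast? = some (.v k b false) := by
    rw [getLast?_append_ne hτ] at hend
    rw [show (QState.w1 :: τ) = [QState.w1] ++ τ from rfl, getLast?_append_ne hτ]
    exact hend
  have hrnk := rnk_chain τ .w1 hch _ hend' (by simp)
  have hkn : k.1 < n := k.2
  have hlen : τ.length = 1 := by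
    simp [rnk] at hrnk; omega
  obtain ⟨x, rfl⟩ := List.length_eq_one_iff.mp hlen
  have : x = QState.v k b false := by
    simpa using hend
  rw [this]

lemma ext_v {ρ σ : List (QState n)} {u : Fin n} {c : Bool}
    (hlast : ρ.getLast? = some (.v u c false))
    (hσ : IsTrack (KQBF n) σ) (hpp : ProperPrefix ρ σ) {k : Fin n} {b : Bool}
    (hend : σ.getLast? = some (.v k b false)) (hk : k.1 + 1 = u.1) :
    σ = ρ ++ [.v u c true, .v k b false] := by
  obtain ⟨τ, rfl, hτ⟩ := pp_decomp hpp
  have hch : List.Chain' (qDelta n) (QState.v u c false :: τ) := chain_tail hσ.2 hlast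
  have hend' : (QState.v u c false :: τ).getLast? = some (.v k b false) := by
    rw [getLast?_append_ne hτ] at hend
    rw [show (QState.v u c false :: τ) = [QState.v u c false] ++ τ from rfl,
      getLast?_append_ne hτ]
    exact hend
  have hrnk := rnk_chain τ _ hch _ hend' (by simp)
  have hkn : k.1 < n := k.2
  have hun : u.1 < n := u.2
  have hlen : τ.length = 2 := by
    simp [rnk] at hrnk; omega
  match τ, hlen with
  | [x, y], _ =>
    unfold List.Chain' at hch; rw [List.isChain_cons_cons, List.isChain_cons_cons] at hch
    obtain ⟨h1, h2, _⟩ := hch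
    have hx := delta_vfalse h1
    subst hx
    have hy : y = QState.v k b false := by
      rw [getLast?_append_ne hτ] at hend
      simpa using hend
    rw [hy]

lemma alpha_append {ρ L : List (QState n)} {j : ℕ} :
    alphaOf n (ρ ++ L) j = true ↔
      (alphaOf n ρ j = true ∧ ∀ w ∈ L, QProp.var j ∈ qMu n w) := by
  simp only [alphaOf_eq_true, List.mem_append]
  constructor
  · intro h; exact ⟨fun w hw => h w (Or.inl hw), fun w hw => h w (Or.inr hw)⟩
  · rintro ⟨h1, h2⟩ w (hw | hw)
    exacts [h1 w hw, h2 w hw]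

lemma alpha_of_false {ρ L : List (QState n)} {j : ℕ} (h : alphaOf n ρ j = false) :
    alphaOf n (ρ ++ L) j = false := by
  cases hα : alphaOf n (ρ ++ L) j with
  | false => rfl
  | true => rw [(alpha_append.mp hα).1] at h; cases h

/-- appending states that keep all relevant vars (except possibly the new choice). -/
lemma alpha_ext {ρ L : List (QState n)} {k : Fin n} {b : Bool}
    (hne : ρ ≠ [])
    (hinv : ∀ w ∈ ρ, QProp.var (k.1 + 1) ∈ qMu n w)
    (hL : ∀ j, 1 ≤ j → j ≤ n → j ≠ k.1 + 1 → alphaOf n ρ j = true →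
        ∀ w ∈ L, QProp.var j ∈ qMu n w)
    (hLk : (∀ w ∈ L, QProp.var (k.1 + 1) ∈ qMu n w) ↔ b = true) :
    alphaOf n (ρ ++ L) = Function.update (alphaOf n ρ) (k.1 + 1) b := by
  funext j
  by_cases hj : j = k.1 + 1
  · subst hj
    simp only [Function.update_self]
    cases b with
    | true =>
      rw [alpha_append]
      exact ⟨alphaOf_eq_true.mpr hinv, hLk.mpr rfl⟩
    | false =>
      cases hα : alphaOf n (ρ ++ L) (k.1+1) with
      | false => rfl
      | true =>
        obtain ⟨_, h2⟩ := alpha_append.mp hα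
        cases hLk.mp h2
  · rw [Function.update_of_ne hj]
    cases hα : alphaOf n ρ j with
    | false => exact alpha_of_false hα
    | true =>
      obtain ⟨wa, hwa⟩ := List.exists_mem_of_ne_nil ρ hne
      have hjb := var_mem_mu_bound (alphaOf_eq_true.mp hα wa hwa)
      exact alpha_append.mpr ⟨hα, hL j hjb.1 hjb.2 hj hα⟩

lemma step_finish (Q : ℕ → Bool) (φ : BForm ℕ) (i : ℕ) (ρ : List (QState n))
    (T : Bool → List (QState n))
    (hchar : ∀ σ, (IsTrack (KQBF n) σ ∧ ProperPrefix ρ σ ∧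
        sat (KQBF n) (.modA (.prop (.aux (i+1)))) σ) ↔ ∃ b, σ = T b)
    (hsat : ∀ b, sat (KQBF n) (xiF Q φ i) (T b) ↔
        qbfTrue Q φ i (Function.update (alphaOf n ρ) (i+1) b)) :
    sat (KQBF n) (xiF Q φ (i+1)) ρ ↔ qbfTrue Q φ (i+1) (alphaOf n ρ) := by
  by_cases hQ : Q (i+1) = true
  · rw [show xiF Q φ (i+1) = .modBbar (.and (.modA (.prop (.aux (i + 1)))) (xiF Q φ i))
      from by simp [xiF, hQ]]
    rw [show qbfTrue Q φ (i+1) (alphaOf n ρ) =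
      ∃ b, qbfTrue Q φ i (Function.update (alphaOf n ρ) (i+1) b) from by simp [qbfTrue, hQ]]
    constructor
    · rintro ⟨σ, h1, h2, h3, h4⟩
      obtain ⟨b, rfl⟩ := (hchar σ).mp ⟨h1, h2, h3⟩
      exact ⟨b, (hsat b).mp h4⟩
    · rintro ⟨b, hb⟩
      obtain ⟨h1, h2, h3⟩ := (hchar (T b)).mpr ⟨b, rfl⟩
      exact ⟨T b, h1, h2, h3, (hsat b).mpr hb⟩
  · rw [show xiF Q φ (i+1) =
      .neg (.modBbar (.and (.modA (.prop (.aux (i + 1)))) (.neg (xiF Q φ i))))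
      from by simp [xiF, hQ]]
    rw [show qbfTrue Q φ (i+1) (alphaOf n ρ) =
      ∀ b, qbfTrue Q φ i (Function.update (alphaOf n ρ) (i+1) b) from by simp [qbfTrue, hQ]]
    constructor
    · intro h b
      by_contra hb
      exact h ⟨T b, ((hchar (T b)).mpr ⟨b, rfl⟩).1, ((hchar (T b)).mpr ⟨b, rfl⟩).2.1,
        ((hchar (T b)).mpr ⟨b, rfl⟩).2.2, fun hs => hb ((hsat b).mp hs)⟩
    · rintro h ⟨σ, h1, h2, h3, h4⟩
      obtain ⟨b, rfl⟩ := (hchar σ).mp ⟨h1, h2, h3⟩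
      exact h4 ((hsat b).mpr (h b))

lemma main_lemma (Q : ℕ → Bool) (φ : BForm ℕ) :
    ∀ i, i ≤ n → ∀ ρ : List (QState n), IsTrack (KQBF n) ρ →
    (i = n → ρ.getLast? = some .w1) →
    (i < n → ∃ (k : Fin n) (c : Bool), k.1 = i ∧ ρ.getLast? = some (.v k c false)) →
    (∀ j, 1 ≤ j → j ≤ i → ∀ w ∈ ρ, QProp.var j ∈ qMu n w) →
    (sat (KQBF n) (xiF Q φ i) ρ ↔ qbfTrue Q φ i (alphaOf n ρ)) := by
  intro i
  induction i with
  | zero =>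
    intro _ ρ _ _ _ _
    rw [show xiF Q φ 0 = φ.toHSQ from rfl]
    rw [show qbfTrue Q φ 0 (alphaOf n ρ) = (φ.eval (alphaOf n ρ) = true) from rfl]
    exact sat_toHSQ φ ρ
  | succ i ih =>
    intro hi1 ρ hρ hEq hLt hInv
    have hn : i < n := by omega
    have hρne : ρ ≠ [] := by
      have := hρ.1; intro h; rw [h] at this; simp at this
    have hInv1 : ∀ w ∈ ρ, QProp.var (i + 1) ∈ qMu n w := hInv (i+1) (by omega) le_rfl
    by_cases hin : i + 1 = n
    · -- last state of ρ is w1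
      have hu : ρ.getLast? = some .w1 := hEq hin
      set T : Bool → List (QState n) := fun b => ρ ++ [QState.v ⟨i, hn⟩ b false] with hT
      have hend : ∀ b, (T b).getLast? = some (.v ⟨i, hn⟩ b false) := by
        intro b; simp [hT]
      have htr : ∀ b, IsTrack (KQBF n) (T b) := by
        intro b
        refine ⟨?_, ?_⟩
        · have := hρ.1; simp [hT]; all_goals omega
        · refine List.isChain_append.mpr ⟨hρ.2, List.isChain_singleton _, ?_⟩
          intro x hx y hy
          rw [hu] at hx; simp at hx hy
          subst hx; subst hy
          exact ⟨show i = n - 1 by omega, rfl⟩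
      have hpp : ∀ b, ProperPrefix ρ (T b) := by
        intro b
        refine ⟨List.prefix_append _ _, ?_, hρ.1⟩
        intro h
        have : ρ.length = ρ.length + 1 := by conv_lhs => rw [h]; simp [hT]
        omega
      have hαT : ∀ b, alphaOf n (T b) = Function.update (alphaOf n ρ) (i + 1) b := by
        intro b
        have := alpha_ext (n := n) (ρ := ρ) (L := [QState.v ⟨i, hn⟩ b false])
          (k := ⟨i, hn⟩) (b := b) hρne hInv1 ?_ ?_
        · exact this
        · intro j hj1 hj2 hj3 _ w hw
          simp at hw; subst hw
          exact var_mem_v hj1 hj2 (Or.inr (show j ≠ i + 1 from hj3))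
        · cases b with
          | true =>
            refine iff_of_true ?_ rfl
            intro w hw
            simp at hw; subst hw
            exact var_mem_v (show 1 ≤ i + 1 by omega) (show i + 1 ≤ n by omega) (Or.inl rfl)
          | false =>
            refine iff_of_false ?_ (by simp)
            intro hall
            exact var_not_mem_v (k := ⟨i, hn⟩) (s := false) (hall _ (by simp))
      apply step_finish Q φ i ρ T
      · intro σ
        constructor
        · rintro ⟨h1, h2, h3⟩
          obtain ⟨k', b, hk', hend'⟩ := modA_aux_end h3
          have hkk : k' = (⟨i, hn⟩ : Fin n) := Fin.ext (show k'.1 = i by omega)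
          refine ⟨b, ?_⟩
          rw [hT]
          rw [← hkk]
          exact ext_w1 hu h1 h2 hend' (by omega)
        · rintro ⟨b, rfl⟩
          exact ⟨htr b, hpp b, modA_aux_of_end (hend b)⟩
      · intro b
        rw [← hαT b]
        refine ih (by omega) (T b) (htr b) (fun h => absurd h (by omega)) ?_ ?_
        · intro _
          exact ⟨⟨i, hn⟩, b, rfl, hend b⟩
        · intro j hj1 hj2 w hw
          rw [hT] at hw
          rcases List.mem_append.mp hw with hw | hw
          · exact hInv j hj1 (by omega) w hw
          · simp at hw; subst hw
            exact var_mem_v hj1 (by omega) (Or.inr (show j ≠ i + 1 by omega))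
    · -- last state of ρ is v u c false with u.1 = i+1
      obtain ⟨u, c, hu1, hu⟩ := hLt (by omega)
      have hulast : QState.v u c false ∈ ρ := List.mem_of_getLast? hu
      set T : Bool → List (QState n) := fun b =>
        ρ ++ [QState.v u c true, QState.v ⟨i, hn⟩ b false] with hT
      have hend : ∀ b, (T b).getLast? = some (.v ⟨i, hn⟩ b false) := by
        intro b; simp [hT]
      have htr : ∀ b, IsTrack (KQBF n) (T b) := by
        intro b
        refine ⟨?_, ?_⟩
        · have := hρ.1; simp [hT]; all_goals omega
        · refine List.isChain_append.mpr ⟨hρ.2, ?_, ?_⟩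
          · refine List.isChain_cons_cons.mpr ⟨?_, List.isChain_singleton _⟩
            exact ⟨show 1 ≤ u.1 by omega, show i = u.1 - 1 by omega, rfl⟩
          · intro x hx y hy
            rw [hu] at hx; simp at hx hy
            subst hx; subst hy
            exact ⟨rfl, rfl, rfl⟩
      have hpp : ∀ b, ProperPrefix ρ (T b) := by
        intro b
        refine ⟨List.prefix_append _ _, ?_, hρ.1⟩
        intro h
        have : ρ.length = ρ.length + 2 := by conv_lhs => rw [h]; simp [hT]
        omega
      have hαT : ∀ b, alphaOf n (T b) = Function.update (alphaOf n ρ) (i + 1) b := by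
        intro b
        have := alpha_ext (n := n) (ρ := ρ)
          (L := [QState.v u c true, QState.v ⟨i, hn⟩ b false])
          (k := ⟨i, hn⟩) (b := b) hρne hInv1 ?_ ?_
        · exact this
        · intro j hj1 hj2 hj3 hαj w hw
          simp at hw
          rcases hw with hw | hw <;> subst hw
          · refine var_mem_v hj1 hj2 ?_
            cases c with
            | true => exact Or.inl rfl
            | false =>
              refine Or.inr ?_
              intro hju
              have := alphaOf_eq_true.mp hαj _ hulast
              rw [hju] at this
              exact var_not_mem_v (k := u) (s := false) this
          · exact var_mem_v hj1 hj2 (Or.inr (show j ≠ i + 1 from hj3))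
        · cases b with
          | true =>
            refine iff_of_true ?_ rfl
            intro w hw
            simp at hw
            rcases hw with hw | hw <;> subst hw
            · exact var_mem_v (show 1 ≤ i + 1 by omega) (show i + 1 ≤ n by omega)
                (by cases c; exacts [Or.inr (show i + 1 ≠ u.1 + 1 by omega), Or.inl rfl])
            · exact var_mem_v (show 1 ≤ i + 1 by omega) (show i + 1 ≤ n by omega) (Or.inl rfl)
          | false =>
            refine iff_of_false ?_ (by simp)
            intro hall
            exact var_not_mem_v (k := ⟨i, hn⟩) (s := false) (hall _ (by simp))
      apply step_finish Q φ i ρ T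
      · intro σ
        constructor
        · rintro ⟨h1, h2, h3⟩
          obtain ⟨k', b, hk', hend'⟩ := modA_aux_end h3
          have hkk : k' = (⟨i, hn⟩ : Fin n) := Fin.ext (show k'.1 = i by omega)
          refine ⟨b, ?_⟩
          rw [hT]
          rw [← hkk]
          exact ext_v hu h1 h2 hend' (by omega)
        · rintro ⟨b, rfl⟩
          exact ⟨htr b, hpp b, modA_aux_of_end (hend b)⟩
      · intro b
        rw [← hαT b]
        refine ih (by omega) (T b) (htr b) (fun h => absurd h (by omega)) ?_ ?_
        · intro _
          exact ⟨⟨i, hn⟩, b, rfl, hend b⟩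
        · intro j hj1 hj2 w hw
          rw [hT] at hw
          rcases List.mem_append.mp hw with hw | hw
          · exact hInv j hj1 (by omega) w hw
          · simp at hw
            rcases hw with hw | hw <;> subst hw
            · exact var_mem_v hj1 (by omega)
                (by cases c; exacts [Or.inr (show j ≠ u.1 + 1 by omega), Or.inl rfl])
            · exact var_mem_v hj1 (by omega) (Or.inr (show j ≠ i + 1 by omega))

lemma start_mem {y : QState n} (h : QProp.start ∈ qMu n y) : y = .w0 ∨ y = .w1 := by
  cases y with
  | w0 => exact Or.inl rfl
  | w1 => exact Or.inr rfl
  | sink =>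
    rcases h with ⟨j, _, _, h3⟩
    cases h3
  | v i b s =>
    cases b with
    | true => rcases h with ⟨j, _, _, h3⟩ | h3 <;> cases h3
    | false => rcases h with ⟨j, _, _, _, h3⟩ | h3 <;> cases h3

lemma initial_start_track {ρ : List (QState n)} (hρ : IsTrack (KQBF n) ρ)
    (hhd : ρ.head? = some .w0) (hstart : ∀ w ∈ ρ, QProp.start ∈ qMu n w) :
    ρ = [.w0, .w1] := by
  obtain ⟨hlen, hch⟩ := hρ
  match ρ, hlen, hch, hhd, hstart with
  | a :: x :: rest, _, hch, hhd, hstart =>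
    have ha : a = QState.w0 := by simpa using hhd
    subst ha
    unfold List.Chain' at hch; rw [List.isChain_cons_cons] at hch
    have hx : x = QState.w1 := delta_w0 hch.1
    subst hx
    cases rest with
    | nil => rfl
    | cons y rest' =>
      rw [List.isChain_cons_cons] at hch
      have hd : qDelta n .w1 y := hch.2.1
      have hy := start_mem (hstart y (by simp))
      rcases hy with rfl | rfl
      · exact absurd hd (by simp [qDelta])
      · exact absurd hd (by simp [qDelta])

lemma w0w1_track : IsTrack (KQBF n) [.w0, .w1] := by
  refine ⟨by simp, ?_⟩
  refine List.isChain_cons_cons.mpr ⟨trivial, List.isChain_singleton _⟩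

lemma w0w1_inv : ∀ j, 1 ≤ j → j ≤ n → ∀ w ∈ ([.w0, .w1] : List (QState n)),
    QProp.var j ∈ qMu n w := by
  intro j hj1 hj2 w hw
  have : w = QState.w0 ∨ w = QState.w1 := by simpa using hw
  rcases this with rfl | rfl
  · exact Or.inl ⟨j, hj1, hj2, rfl⟩
  · exact Or.inl ⟨j, hj1, hj2, rfl⟩

lemma main_w0w1 (Q : ℕ → Bool) (φ : BForm ℕ) :
    sat (KQBF n) (xiF Q φ n) [.w0, .w1] ↔ qbfTrue Q φ n (alphaOf n [.w0, .w1]) := by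
  refine main_lemma Q φ n le_rfl _ w0w1_track (fun _ => by simp)
    (fun h => absurd h (lt_irrefl n)) (fun j hj1 hj2 => w0w1_inv j hj1 hj2)

end QAux


/-- the QBF `ψ = Q_n x_n ⋯ Q_1 x_1 φ` is true iff every initial track
of `K_QBF^Var` satisfies `ξ = start → ξ_n`. -/
theorem qbf_model_checking (n : ℕ) (Q : ℕ → Bool) (φ : BForm ℕ)
    (hvars : ∀ x ∈ φ.vars, 1 ≤ x ∧ x ≤ n) :
    (∀ α : ℕ → Bool, qbfTrue Q φ n α) ↔
      (∀ ρ : List (QState n), IsTrack (KQBF n) ρ → ρ.head? = some .w0 →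
        sat (KQBF n) (.neg (.and (.prop .start) (.neg (xiF Q φ n)))) ρ) := by
  open QAux in
  constructor
  · intro hα ρ hρ hhd
    rintro ⟨hstart, hnot⟩
    have hρeq : ρ = [.w0, .w1] := initial_start_track hρ hhd hstart
    subst hρeq
    exact hnot ((main_w0w1 Q φ).mpr (hα _))
  · intro h α
    have h2 := h [.w0, .w1] w0w1_track rfl
    have hstart : sat (KQBF n) (.prop .start) [(QState.w0 : QState n), .w1] := by
      intro w hw
      have : w = QState.w0 ∨ w = QState.w1 := by simpa using hw
      rcases this with rfl | rfl
      · exact Or.inr rfl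
      · exact Or.inr rfl
    have hξ : sat (KQBF n) (xiF Q φ n) [.w0, .w1] := by
      by_contra hc
      exact h2 ⟨hstart, hc⟩
    have h0 := (main_w0w1 Q φ).mp hξ
    exact (qbf_congr Q φ n (alphaOf n [.w0, .w1]) α
      (fun x hx => Or.inl (hvars x hx))).mp h0
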